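/- Let X be a set with a right self-distributive binary operation ▷. For n ≥ 1 and 0 ≤ i ≤ n define d_{i,n} : X^{n+1} → X^n by d_{i,n}(x_0, x_1, …, x_n) = (x_0 ▷ x_i, x_1 ▷ x_i, …, x_{i−1} ▷ x_i, x_{i+1}, …, x_n) (so d_{0,n}(x_0, …, x_n) = (x_1, …, x_n)). Then for all 0 ≤ i < j ≤ n one has d_{i,n−1} ∘ d_{j,n} = d_{j−1,n−1} ∘ d_{i,n}; that is, (X^{n+1}, d_i) is a presimplicial set. -/
import Mathlib


/-- The face map `d_{i,n} : X^{n+1} → X^n` of a right self-distributive structure: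
`d_{i,n}(x_0, …, x_n) = (x_0 ▷ x_i, …, x_{i-1} ▷ x_i, x_{i+1}, …, x_n)`. -/
def distribFace {X : Type*} (op : X → X → X) (n : ℕ) (i : Fin (n + 1))
    (x : Fin (n + 1) → X) : Fin n → X :=
  fun j => if (j : ℕ) < (i : ℕ) then op (x j.castSucc) (x i) else x j.succ

/-- **One-term distributive face maps form a presimplicial set.**
If `▷` is right self-distributive then `d_{i,n-1} ∘ d_{j,n} = d_{j-1,n-1} ∘ d_{i,n}`
for all `0 ≤ i < j ≤ n`. (Here `distribFace op (n+1) j : X^{n+2} → X^{n+1}` plays the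
role of `d_{j,n+1}` and `distribFace op n i : X^{n+1} → X^n` the role of `d_{i,n}`.) -/
theorem distribFace_presimplicial {X : Type*} (op : X → X → X)
    (hop : ∀ a b c : X, op (op a b) c = op (op a c) (op b c)) :
    ∀ (n : ℕ) (i : Fin (n + 1)) (j : Fin (n + 2)), (i : ℕ) < (j : ℕ) →
      (distribFace op n i) ∘ (distribFace op (n + 1) j) =
        (distribFace op n ⟨(j : ℕ) - 1, by have := j.isLt; omega⟩) ∘
          (distribFace op (n + 1) ⟨(i : ℕ), by have := i.isLt; omega⟩) := by
  intro n i j hij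
  funext x k
  have hj := j.isLt
  have hi := i.isLt
  have hk := k.isLt
  simp only [Function.comp_apply, distribFace, Fin.coe_castSucc, Fin.val_succ, Fin.val_mk]
  rw [show x ((⟨(j:ℕ)-1, by omega⟩ : Fin (n+1)).succ) = x j from
      congrArg x (by ext; simp; omega),
    show x (⟨(i:ℕ), by omega⟩ : Fin (n+2)) = x i.castSucc from rfl]
  split_ifs <;> first | rfl | omega | exact (hop _ _ _).symm
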